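/- For every ditree T, the closed in-neighborhood graph N_c⁻(T) is a chordal graph (it contains no induced cycle of length at least 4). -/

import Mathlib

open SimpleGraph

variable {V W : Type*}

/-- The closed out-neighborhood of `v` in the digraph with arc relation `A`. -/
def NplusC (A : V → V → Prop) (v : V) : Set V := insert v {u | A v u}

/-- The closed in-neighborhood of `v`. -/
def NminusC (A : V → V → Prop) (v : V) : Set V := insert v {u | A u v}

/-- The open out-neighborhood of `v`. -/
def NplusO (A : V → V → Prop) (v : V) : Set V := {u | A v u}

/-- The open in-neighborhood of `v`. -/
def NminusO (A : V → V → Prop) (v : V) : Set V := {u | A u v}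

/-- `S` is a dominating set: every vertex is in a closed out-neighborhood of a member of `S`. -/
def IsDomSet (A : V → V → Prop) (S : Set V) : Prop := ∀ u, ∃ v ∈ S, u ∈ NplusC A v

/-- The domination number of a digraph. -/
noncomputable def domNum (V : Type*) [Fintype V] (A : V → V → Prop) : ℕ :=
  sInf {n | ∃ S : Set V, IsDomSet A S ∧ S.ncard = n}

/-- `P` is a packing: closed in-neighborhoods of members are pairwise disjoint. -/
def IsPacking (A : V → V → Prop) (P : Set V) : Prop :=
  P.Pairwise fun x y => Disjoint (NminusC A x) (NminusC A y)

/-- The packing number of a digraph. -/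
noncomputable def packNum (V : Type*) [Fintype V] (A : V → V → Prop) : ℕ :=
  sSup {n | ∃ P : Set V, IsPacking A P ∧ P.ncard = n}

/-- `S` is a total dominating set: every vertex has an in-neighbor in `S`. -/
def IsTotalDomSet (A : V → V → Prop) (S : Set V) : Prop := ∀ u, ∃ v ∈ S, A v u

/-- The total domination number of a digraph. -/
noncomputable def totalDomNum (V : Type*) [Fintype V] (A : V → V → Prop) : ℕ :=
  sInf {n | ∃ S : Set V, IsTotalDomSet A S ∧ S.ncard = n}

/-- `P` is an open packing: open in-neighborhoods of members are pairwise disjoint. -/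
def IsOpenPacking (A : V → V → Prop) (P : Set V) : Prop :=
  P.Pairwise fun x y => Disjoint (NminusO A x) (NminusO A y)

/-- The open packing number of a digraph. -/
noncomputable def openPackNum (V : Type*) [Fintype V] (A : V → V → Prop) : ℕ :=
  sSup {n | ∃ P : Set V, IsOpenPacking A P ∧ P.ncard = n}

/-- The underlying (simple) graph of a digraph. -/
def ugr (A : V → V → Prop) : SimpleGraph V := SimpleGraph.fromRel A

/-- A ditree is a digraph whose underlying graph is a tree. -/
def IsDitree (A : V → V → Prop) : Prop := (ugr A).IsTree

/-- Arc relation of the Cartesian product of two digraphs. -/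
def cartArc (A : V → V → Prop) (B : W → W → Prop) : V × W → V × W → Prop :=
  fun p q => (p.1 = q.1 ∧ B p.2 q.2) ∨ (p.2 = q.2 ∧ A p.1 q.1)

/-- Arc relation of the direct product of two digraphs. -/
def dirArc (A : V → V → Prop) (B : W → W → Prop) : V × W → V × W → Prop :=
  fun p q => A p.1 q.1 ∧ B p.2 q.2

/-- The closed in-neighborhood graph of a digraph: distinct vertices are adjacent iff
their closed in-neighborhoods intersect. -/
def Ncg (A : V → V → Prop) : SimpleGraph V :=
  SimpleGraph.fromRel (fun u v => (NminusC A u ∩ NminusC A v).Nonempty)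

/-- The open in-neighborhood graph of a digraph: distinct vertices are adjacent iff
their open in-neighborhoods intersect. -/
def Nog (A : V → V → Prop) : SimpleGraph V :=
  SimpleGraph.fromRel (fun u v => (NminusO A u ∩ NminusO A v).Nonempty)

private lemma concat_isPath' {V : Type*} {G : SimpleGraph V} {u v w : V} {p : G.Walk u v}
    (h : G.Adj v w) (hp : p.IsPath) (hw : w ∉ p.support) : (p.concat h).IsPath := by
  rw [← Walk.isPath_reverse_iff, Walk.reverse_concat]
  exact (Walk.cons_isPath_iff _ _).2 ⟨hp.reverse, by simpa using hw⟩

private lemma no_nonbacktracking {V : Type*} [Fintype V] {G : SimpleGraph V}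
    (hG : G.IsAcyclic) (x : ℕ → V)
    (hadj : ∀ k, G.Adj (x k) (x (k + 1))) (hnb : ∀ k, x k ≠ x (k + 2)) : False := by
  classical
  have key : ∀ k, ∃ p : G.Walk (x 0) (x (k+1)), p.IsPath ∧ p.length = k + 1 ∧
      ∃ q : G.Walk (x 0) (x k), p = q.concat (hadj k) := by
    intro k
    induction k with
    | zero =>
      refine ⟨Walk.nil.concat (hadj 0), ?_, by simp [Walk.length_concat], Walk.nil, rfl⟩
      rw [Walk.concat_nil]
      exact (Walk.cons_isPath_iff _ _).2 ⟨Walk.IsPath.nil, by simp [(hadj 0).ne]⟩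
    | succ k ih =>
      obtain ⟨p, hp, hlen, q, hq⟩ := ih
      have hmem : x (k + 2) ∉ p.support := by
        intro hmem
        have hd : (p.dropUntil _ hmem).IsPath := hp.dropUntil hmem
        have he : (Walk.cons (hadj (k+1)).symm Walk.nil : G.Walk (x (k+2)) (x (k+1))).IsPath :=
          (Walk.cons_isPath_iff _ _).2 ⟨Walk.IsPath.nil, by simpa using (hadj (k+1)).ne'⟩
        have hpath := hG.path_unique ⟨_, hd⟩ ⟨_, he⟩
        have hde : p.dropUntil _ hmem = Walk.cons (hadj (k+1)).symm Walk.nil :=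
          congrArg Subtype.val hpath
        have hsplit := p.take_spec hmem
        rw [hde] at hsplit
        have hp2 : (p.takeUntil _ hmem).concat (hadj (k+1)).symm = p := by
          rw [Walk.concat_eq_append]; exact hsplit
        obtain ⟨hv, -⟩ := Walk.concat_inj (hp2.trans hq)
        exact hnb k hv.symm
      exact ⟨p.concat (hadj (k+1)), concat_isPath' _ hp hmem,
        by simp [Walk.length_concat, hlen], p, rfl⟩
  obtain ⟨p, hp, hlen, -⟩ := key (Fintype.card V)
  have := hp.length_lt
  omega

private def flatSt {V : Type*} (mid : ℕ → Option V) : ℕ → ℕ × Bool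
  | 0 => (0, false)
  | t+1 => match flatSt mid t with
    | (i, false) => if (mid i).isSome then (i, true) else (i+1, false)
    | (i, true) => (i+1, false)

private def flatVal {V : Type*} (v : ℕ → V) (mid : ℕ → Option V) : ℕ × Bool → V
  | (i, false) => v i
  | (i, true) => (mid i).getD (v i)

open scoped Fin.NatCast Fin.CommRing

private lemma fin_natCast_ne {N : ℕ} [NeZero N] {a b : ℕ} (ha : a < N) (hb : b < N)
    (hab : a ≠ b) : ((a : Fin N)) ≠ (b : Fin N) := by
  intro h
  apply hab
  rw [← Fin.val_cast_of_lt ha, ← Fin.val_cast_of_lt hb, h]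

theorem stmt10 {V : Type*} [Fintype V] (A : V → V → Prop)
    (hirr : ∀ v, ¬ A v v) (hT : IsDitree A) :
    ∀ n : ℕ, 4 ≤ n → IsEmpty (SimpleGraph.cycleGraph n ↪g Ncg A) := by
  intro n hn
  constructor
  intro f
  obtain ⟨m, rfl⟩ : ∃ m, n = m + 2 := ⟨n - 2, by omega⟩
  have hm : 2 ≤ m := by omega
  -- Fin numeral facts
  have h2ne0 : (2 : Fin (m+2)) ≠ 0 := by
    simpa using fin_natCast_ne (N := m+2) (a := 2) (b := 0) (by omega) (by omega) (by omega)
  have h3ne0 : (3 : Fin (m+2)) ≠ 0 := by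
    simpa using fin_natCast_ne (N := m+2) (a := 3) (b := 0) (by omega) (by omega) (by omega)
  have h2ne1 : (2 : Fin (m+2)) ≠ 1 := by
    simpa using fin_natCast_ne (N := m+2) (a := 2) (b := 1) (by omega) (by omega) (by omega)
  set v : ℕ → V := fun i => f (i : Fin (m+2)) with hv
  have hmap : ∀ a b : Fin (m+2), (Ncg A).Adj (f a) (f b) ↔ (cycleGraph (m+2)).Adj a b :=
    fun a b => f.map_rel_iff
  have hfinj : Function.Injective f := f.injective
  have hcyc1 : ∀ i : ℕ, (cycleGraph (m+2)).Adj (i : Fin (m+2)) ((i+1 : ℕ) : Fin (m+2)) := by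
    intro i
    rw [cycleGraph_adj]
    right
    push_cast
    ring
  have hcyc2 : ∀ i : ℕ, ¬ (cycleGraph (m+2)).Adj (i : Fin (m+2)) ((i+2 : ℕ) : Fin (m+2)) := by
    intro i h
    rw [cycleGraph_adj] at h
    push_cast at h
    rcases h with h | h
    · exact h3ne0 (by linear_combination -h)
    · exact h2ne1 (by linear_combination h)
  have hvadj : ∀ i : ℕ, (Ncg A).Adj (v i) (v (i+1)) := fun i => (hmap _ _).mpr (hcyc1 i)
  have hvne2 : ∀ i : ℕ, v i ≠ v (i+2) := by
    intro i h
    have h' := hfinj h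
    push_cast at h'
    exact h2ne0 (by linear_combination -h')
  have hvnadj : ∀ i : ℕ, ¬ (Ncg A).Adj (v i) (v (i+2)) := fun i h => hcyc2 i ((hmap _ _).mp h)
  -- adjacency helpers
  have hNcg : ∀ u w : V, u ≠ w → (∃ z, (z = u ∨ A z u) ∧ (z = w ∨ A z w)) → (Ncg A).Adj u w := by
    rintro u w hne ⟨z, h1, h2⟩
    rw [Ncg, SimpleGraph.fromRel_adj]
    exact ⟨hne, Or.inl ⟨z, Set.mem_insert_iff.mpr h1, Set.mem_insert_iff.mpr h2⟩⟩
  have hNcg' : ∀ u w : V, (Ncg A).Adj u w →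
      u ≠ w ∧ ∃ z, (z = u ∨ A z u) ∧ (z = w ∨ A z w) := by
    intro u w h
    rw [Ncg, SimpleGraph.fromRel_adj] at h
    obtain ⟨hne, h | h⟩ := h
    · obtain ⟨z, hz1, hz2⟩ := h
      exact ⟨hne, z, Set.mem_insert_iff.mp hz1, Set.mem_insert_iff.mp hz2⟩
    · obtain ⟨z, hz1, hz2⟩ := h
      exact ⟨hne, z, Set.mem_insert_iff.mp hz2, Set.mem_insert_iff.mp hz1⟩
  have hugr : ∀ u w : V, u ≠ w → (A u w ∨ A w u) → (ugr A).Adj u w := by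
    intro u w h1 h2
    rw [ugr, SimpleGraph.fromRel_adj]
    exact ⟨h1, h2⟩
  have hcontra : ∀ (i : ℕ) (z : V), (z = v i ∨ A z (v i)) → (z = v (i+2) ∨ A z (v (i+2))) →
      False := fun i z h1 h2 => hvnadj i (hNcg _ _ (hvne2 i) ⟨z, h1, h2⟩)
  -- choose midpoints
  have hseg : ∀ i : ℕ, (ugr A).Adj (v i) (v (i+1)) ∨
      ∃ w, A w (v i) ∧ A w (v (i+1)) ∧ (ugr A).Adj (v i) w ∧ (ugr A).Adj w (v (i+1)) := by
    intro i
    obtain ⟨hne, z, hz1, hz2⟩ := hNcg' _ _ (hvadj i)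
    by_cases e1 : z = v i
    · subst e1
      rcases hz2 with e2 | harc
      · exact absurd e2 hne
      · exact Or.inl (hugr _ _ hne (Or.inl harc))
    · by_cases e2 : z = v (i+1)
      · subst e2
        rcases hz1 with e | harc
        · exact absurd e.symm hne
        · exact Or.inl (hugr _ _ hne (Or.inr harc))
      · rcases hz1 with e | h1
        · exact absurd e e1
        rcases hz2 with e | h2
        · exact absurd e e2
        exact Or.inr ⟨z, h1, h2, hugr _ _ (Ne.symm e1) (Or.inr h1), hugr _ _ e2 (Or.inl h2)⟩
  have hchoice : ∀ i : ℕ, ∃ o : Option V,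
      (o = none ∧ (ugr A).Adj (v i) (v (i+1))) ∨
      (∃ w, o = some w ∧ A w (v i) ∧ A w (v (i+1)) ∧
        (ugr A).Adj (v i) w ∧ (ugr A).Adj w (v (i+1))) := by
    intro i
    rcases hseg i with h | ⟨w, hw⟩
    exacts [⟨none, Or.inl ⟨rfl, h⟩⟩, ⟨some w, Or.inr ⟨w, rfl, hw⟩⟩]
  choose mid hmid using hchoice
  set x : ℕ → V := fun t => flatVal v mid (flatSt mid t) with hx
  have hstsucc : ∀ t, flatSt mid (t+1) = match flatSt mid t with
      | (i, false) => if (mid i).isSome then (i, true) else (i+1, false)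
      | (i, true) => (i+1, false) := fun t => rfl
  have hinv : ∀ t i, flatSt mid t = (i, true) → (mid i).isSome := by
    intro t
    induction t with
    | zero => intro i h; simp [flatSt] at h
    | succ t ih =>
      intro i h
      rw [hstsucc] at h
      rcases hst : flatSt mid t with ⟨j, c⟩
      rw [hst] at h
      cases c with
      | false =>
        simp only at h
        by_cases hs : (mid j).isSome
        · rw [if_pos hs] at h
          obtain ⟨rfl, -⟩ := Prod.mk.injEq .. ▸ (Prod.ext_iff.mp h)
          exact hs
        · rw [if_neg hs] at h
          exact absurd (Prod.ext_iff.mp h).2 (by simp)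
      | true => exact absurd (Prod.ext_iff.mp h).2 (by simp)
  -- main case analysis
  have hAx : ∀ t, (ugr A).Adj (x t) (x (t+1)) := by
    intro t
    rcases hst : flatSt mid t with ⟨i, b⟩
    have hxt : x t = flatVal v mid (i, b) := by rw [hx]; simp only; rw [hst]
    cases b with
    | false =>
      rcases hmid i with ⟨hnone, hadj'⟩ | ⟨w, hsome, hw1, hw2, hw3, hw4⟩
      · have h1 : flatSt mid (t+1) = (i+1, false) := by
          rw [hstsucc, hst]; simp [hnone]
        rw [hx]; simp only; rw [hst, h1]
        exact hadj'
      · have h1 : flatSt mid (t+1) = (i, true) := by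
          rw [hstsucc, hst]; simp [hsome]
        rw [hx]; simp only; rw [hst, h1]
        simpa [flatVal, hsome] using hw3
    | true =>
      obtain ⟨w, hsome⟩ := Option.isSome_iff_exists.mp (hinv t i hst)
      rcases hmid i with ⟨hnone, -⟩ | ⟨w', hsome', hw1, hw2, hw3, hw4⟩
      · rw [hnone] at hsome; exact absurd hsome (by simp)
      have h1 : flatSt mid (t+1) = (i+1, false) := by rw [hstsucc, hst]
      rw [hx]; simp only; rw [hst, h1]
      simpa [flatVal, hsome'] using hw4
  have hnbx : ∀ t, x t ≠ x (t+2) := by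
    intro t
    rcases hst : flatSt mid t with ⟨i, b⟩
    cases b with
    | false =>
      rcases hmid i with ⟨hnone, hadj'⟩ | ⟨w, hsome, hw1, hw2, hw3, hw4⟩
      · have h1 : flatSt mid (t+1) = (i+1, false) := by rw [hstsucc, hst]; simp [hnone]
        rcases hmid (i+1) with ⟨hnone', -⟩ | ⟨w', hsome', hw1', hw2', hw3', hw4'⟩
        · have h2 : flatSt mid (t+2) = (i+2, false) := by
            rw [hstsucc, h1]; simp [hnone']
          rw [hx]; simp only; rw [hst, h2]
          exact hvne2 i
        · have h2 : flatSt mid (t+2) = (i+1, true) := by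
            rw [hstsucc, h1]; simp [hsome']
          rw [hx]; simp only; rw [hst, h2]
          simp only [flatVal, hsome', Option.getD_some]
          intro h
          exact hcontra i (v i) (Or.inl rfl) (Or.inr (h ▸ hw2'))
      · have h1 : flatSt mid (t+1) = (i, true) := by rw [hstsucc, hst]; simp [hsome]
        have h2 : flatSt mid (t+2) = (i+1, false) := by rw [hstsucc, h1]
        rw [hx]; simp only; rw [hst, h2]
        exact (hvadj i).ne
    | true =>
      obtain ⟨w0, hsome0⟩ := Option.isSome_iff_exists.mp (hinv t i hst)
      rcases hmid i with ⟨hnone, -⟩ | ⟨w, hsome, hw1, hw2, hw3, hw4⟩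
      · rw [hnone] at hsome0; exact absurd hsome0 (by simp)
      have h1 : flatSt mid (t+1) = (i+1, false) := by rw [hstsucc, hst]
      rcases hmid (i+1) with ⟨hnone', -⟩ | ⟨w', hsome', hw1', hw2', hw3', hw4'⟩
      · have h2 : flatSt mid (t+2) = (i+2, false) := by rw [hstsucc, h1]; simp [hnone']
        rw [hx]; simp only; rw [hst, h2]
        simp only [flatVal, hsome, Option.getD_some]
        intro h
        exact hcontra i w (Or.inr hw1) (Or.inl h)
      · have h2 : flatSt mid (t+2) = (i+1, true) := by rw [hstsucc, h1]; simp [hsome']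
        rw [hx]; simp only; rw [hst, h2]
        simp only [flatVal, hsome, hsome', Option.getD_some]
        intro h
        exact hcontra i w (Or.inr hw1) (Or.inr (h ▸ hw2'))
  exact no_nonbacktracking hT.IsAcyclic x hAx hnbx
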